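/- Let ∇ be an A-anisotropic connection on a smooth manifold M, let v ∈ A, let Ω ⊂ M be an open neighbourhood of p = π(v), and let V ∈ 𝔛(Ω) be any A-admissible vector field extending v. Then for all vector fields X, Y, Z ∈ 𝔛(Ω), the curvature tensor R of ∇ satisfies R_v(X,Y)Z = (R^V)_p(X,Y)Z − (P_V)_p(Y, Z, ∇^V_X V) + (P_V)_p(X, Z, ∇^V_Y V), where R^V is the curvature tensor of the affine connection ∇^V on Ω and P is the vertical derivative of ∇. -/

import Mathlib

open Set
open scoped Topology

noncomputable section

/-! ## Chart model for the anisotropic tensor calculus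

The manifold is (a chart of) a finite-dimensional real vector space `E`, its
tangent bundle is `E × E` with projection `Prod.fst` (so a point of `TM` is
`v = (v.1, v.2)` with `π v = v.1`), vector fields are maps `E → E`, smooth
functions and fields are `ContDiff ℝ ⊤`, and `A ⊆ E × E` is the open set of
admissible directions. -/

variable {E : Type*} [NormedAddCommGroup E] [NormedSpace ℝ E]

/-- Lie bracket of vector fields in the chart model. -/
def lieB (X Y : E → E) : E → E := fun p => fderiv ℝ Y p (X p) - fderiv ℝ X p (Y p)

/-- Constant vector field. -/
def cv (x : E) : E → E := fun _ => x

/-- Vertical derivative of an anisotropic vector field `𝒴`. -/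
def vdiff (𝒴 : E × E → E) (v : E × E) (z : E) : E :=
  deriv (fun t : ℝ => 𝒴 (v.1, v.2 + t • z)) 0

/-- Vertical derivative `∂^ν T` of a pointwise anisotropic `(1,2)`-tensor. -/
def vd12 (T : E × E → E → E → E) (v : E × E) (x y b : E) : E :=
  deriv (fun t : ℝ => T (v.1, v.2 + t • b) x y) 0

/-- Vertical derivative `∂^ν T` of a pointwise anisotropic `(1,3)`-tensor. -/
def vd13 (T : E × E → E → E → E → E) (v : E × E) (x y z b : E) : E :=
  deriv (fun t : ℝ => T (v.1, v.2 + t • b) x y z) 0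

/-- An `A`-anisotropic (linear) connection (Definition 2.2 of the paper), in the
chart model: a map `(v, X, Y) ↦ ∇^v_X Y ∈ T_{π(v)}M = E`, additive and Leibniz in
`Y`, `𝓕(M)`-linear in `X`, and smooth in `v ∈ A` for fixed smooth `X, Y`. -/
structure AnisoConn (A : Set (E × E)) : Type _ where
  conn : E × E → (E → E) → (E → E) → E
  add_right : ∀ v ∈ A, ∀ X Y Z : E → E,
    conn v X (fun p => Y p + Z p) = conn v X Y + conn v X Z
  leibniz : ∀ v ∈ A, ∀ f : E → ℝ, ContDiff ℝ (⊤ : ℕ∞) f → ∀ X Y : E → E,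
    conn v X (fun p => f p • Y p)
      = fderiv ℝ f v.1 (X v.1) • Y v.1 + f v.1 • conn v X Y
  base_linear : ∀ v ∈ A, ∀ (f h : E → ℝ) (X Y Z : E → E),
    conn v (fun p => f p • X p + h p • Y p) Z
      = f v.1 • conn v X Z + h v.1 • conn v Y Z
  smooth_conn : ∀ X Y : E → E, ContDiff ℝ (⊤ : ℕ∞) X → ContDiff ℝ (⊤ : ℕ∞) Y →
    ContDiffOn ℝ (⊤ : ℕ∞) (fun v => conn v X Y) A

namespace AnisoConn

variable {A : Set (E × E)} (D : AnisoConn A)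

/-- Pointwise Christoffel operator `Γ_v(x,y) = ∇^v_{x}y` (on constant fields). -/
def Γ (v : E × E) (x y : E) : E := D.conn v (cv x) (cv y)

/-- The affine connection `∇^V` induced by an admissible extension `V`. -/
def connV (V : E → E) (X Y : E → E) : E → E := fun p => D.conn (p, V p) X Y

/-- Curvature tensor `R^V` of the affine connection `∇^V`. -/
def RV (V : E → E) (X Y Z : E → E) : E → E := fun p =>
  D.connV V X (D.connV V Y Z) p - D.connV V Y (D.connV V X Z) p
    - D.connV V (lieB X Y) Z p

/-- Canonical derivative `∇^v_X 𝒴` of an anisotropic vector field `𝒴`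
(eq. (12) of the paper, computed with the constant extension of `v`). -/
def dAniso (v : E × E) (X : E → E) (𝒴 : E × E → E) : E :=
  D.conn v X (fun p => 𝒴 (p, v.2)) - vdiff 𝒴 v (D.conn v X (cv v.2))

/-- Curvature tensor of the anisotropic connection, on vector fields. -/
def R (v : E × E) (X Y Z : E → E) : E :=
  D.dAniso v X (fun w => D.conn w Y Z) - D.dAniso v Y (fun w => D.conn w X Z)
    - D.conn v (lieB X Y) Z

/-- Curvature tensor, pointwise on tangent vectors. -/
def Rt (v : E × E) (u w z : E) : E := D.R v (cv u) (cv w) (cv z)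

/-- Vertical derivative `P` of the connection, on vector fields. -/
def P (v : E × E) (X Y : E → E) (z : E) : E :=
  deriv (fun t : ℝ => D.conn (v.1, v.2 + t • z) X Y) 0

/-- Vertical derivative `P` of the connection, pointwise. -/
def Pt (v : E × E) (x y z : E) : E := D.P v (cv x) (cv y) z

/-- Torsion of the connection, on vector fields. -/
def tors (v : E × E) (X Y : E → E) : E := D.conn v X Y - D.conn v Y X - lieB X Y v.1

/-- Torsion of the connection, pointwise. -/
def torst (v : E × E) (x y : E) : E := D.Γ v x y - D.Γ v y x

/-- Torsion-free anisotropic connection. -/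
def IsTorsionFree : Prop :=
  ∀ v ∈ A, ∀ X Y : E → E, ContDiff ℝ (⊤ : ℕ∞) X → ContDiff ℝ (⊤ : ℕ∞) Y →
    D.tors v X Y = 0

/-- Anisotropic tensor derivative `(∇_u T)_v` of a pointwise scalar-valued
anisotropic `(0,2)`-tensor (formulas (4) and (6) of the paper, computed with
the canonical constant extension of `v`). -/
def dT02 (T : E × E → E → E → ℝ) (v : E × E) (u x y : E) : ℝ :=
  fderiv ℝ (fun q => T (q, v.2) x y) v.1 u
    - deriv (fun t : ℝ => T (v.1, v.2 + t • D.Γ v u v.2) x y) 0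
    - T v (D.Γ v u x) y - T v x (D.Γ v u y)

/-- Anisotropic tensor derivative `(∇_u T)_v` of a pointwise `(1,2)`-tensor. -/
def dT12 (T : E × E → E → E → E) (v : E × E) (u x y : E) : E :=
  fderiv ℝ (fun q => T (q, v.2) x y) v.1 u
    - deriv (fun t : ℝ => T (v.1, v.2 + t • D.Γ v u v.2) x y) 0
    - T v (D.Γ v u x) y - T v x (D.Γ v u y)

/-- Anisotropic tensor derivative `(∇_u T)_v` of a pointwise `(1,3)`-tensor. -/
def dT13 (T : E × E → E → E → E → E) (v : E × E) (u x y z : E) : E :=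
  fderiv ℝ (fun q => T (q, v.2) x y z) v.1 u
    - deriv (fun t : ℝ => T (v.1, v.2 + t • D.Γ v u v.2) x y z) 0
    - T v (D.Γ v u x) y z - T v x (D.Γ v u y) z - T v x y (D.Γ v u z)

/-- Anisotropic tensor derivative of a pointwise `(0,s)`-tensor. -/
def dT0 {s : ℕ} (T : E × E → (Fin s → E) → ℝ) (v : E × E) (u : E) (x : Fin s → E) : ℝ :=
  fderiv ℝ (fun q => T (q, v.2) x) v.1 u
    - deriv (fun t : ℝ => T (v.1, v.2 + t • D.Γ v u v.2) x) 0
    - ∑ j, T v (Function.update x j (D.Γ v u (x j)))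

/-- Anisotropic tensor derivative of a pointwise `(1,s)`-tensor. -/
def dT1 {s : ℕ} (T : E × E → (Fin s → E) → E) (v : E × E) (u : E) (x : Fin s → E) : E :=
  fderiv ℝ (fun q => T (q, v.2) x) v.1 u
    - deriv (fun t : ℝ => T (v.1, v.2 + t • D.Γ v u v.2) x) 0
    - ∑ j, T v (Function.update x j (D.Γ v u (x j)))

/-- Covariant derivative `D^v_γ X` along a curve `γ`, induced by the connection. -/
def Dcurve (γ : ℝ → E) (v : E × E) (X : ℝ → E) (t₀ : ℝ) : E :=
  deriv X t₀ + D.Γ v (deriv γ t₀) (X t₀)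

/-- Auto-parallel (A-admissible) curve on `[a,b]` : `D^{γ̇}_γ γ̇ = 0`. -/
def IsAutoParallel (γ : ℝ → E) (a b : ℝ) : Prop :=
  ∀ t ∈ Icc a b, (γ t, deriv γ t) ∈ A ∧
    D.Dcurve γ (γ t, deriv γ t) (deriv γ) t = 0

/-- A Jacobi field along `γ` : the variational field of a variation of `γ`
all of whose longitudinal curves are auto-parallel. -/
def IsJacobiField (γ : ℝ → E) (a b : ℝ) (J : ℝ → E) : Prop :=
  ∃ ε > (0 : ℝ), ∃ Λ : ℝ → ℝ → E,
    ContDiff ℝ (⊤ : ℕ∞) (fun q : ℝ × ℝ => Λ q.1 q.2) ∧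
    (∀ t, Λ t 0 = γ t) ∧
    (∀ s ∈ Ioo (-ε) ε, D.IsAutoParallel (fun r => Λ r s) a b) ∧
    ∀ t ∈ Icc a b, J t = deriv (fun s => Λ t s) 0

/-- Covariant `t`-derivative `D^{γ̇_s}_{γ_s} U` of a field `U` along a
two-parameter map `Λ`, in the direction of the velocities of the longitudinal
curves. -/
def Dt2 (Λ U : ℝ → ℝ → E) (t s : ℝ) : E :=
  deriv (fun r => U r s) t
    + D.Γ (Λ t s, deriv (fun r => Λ r s) t) (deriv (fun r => Λ r s) t) (U t s)

/-- Covariant `s`-derivative `D^{γ̇_s}_{β_t} U` of a field `U` along a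
two-parameter map `Λ`. -/
def Ds2 (Λ U : ℝ → ℝ → E) (t s : ℝ) : E :=
  deriv (fun r => U t r) s
    + D.Γ (Λ t s, deriv (fun r => Λ r s) t) (deriv (fun r => Λ t r) s) (U t s)

end AnisoConn

/-- The fundamental tensor `g_v` of a pseudo-Finsler metric `L`. -/
def fundTensor (L : E × E → ℝ) (v : E × E) (u w : E) : ℝ :=
  (1 / 2) * deriv (fun t : ℝ => deriv (fun s : ℝ => L (v.1, v.2 + t • u + s • w)) 0) 0

/-- The Cartan tensor `C_v` of a pseudo-Finsler metric `L`. -/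
def cartan (L : E × E → ℝ) (v : E × E) (w₁ w₂ w₃ : E) : ℝ :=
  (1 / 4) * deriv (fun s₃ : ℝ => deriv (fun s₂ : ℝ =>
      deriv (fun s₁ : ℝ => L (v.1, v.2 + s₁ • w₁ + s₂ • w₂ + s₃ • w₃)) 0) 0) 0

/-- A pseudo-Finsler metric on a conic open subset `A ⊆ TM ∖ 0`. -/
structure IsPseudoFinsler (A : Set (E × E)) (L : E × E → ℝ) : Prop where
  isOpen : IsOpen A
  proj_surj : ∀ p : E, ∃ y : E, (p, y) ∈ A
  not_zero : ∀ v ∈ A, v.2 ≠ (0 : E)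
  conic : ∀ v ∈ A, ∀ lam : ℝ, 0 < lam → (v.1, lam • v.2) ∈ A
  smooth : ContDiffOn ℝ (⊤ : ℕ∞) L A
  homogeneous : ∀ v ∈ A, ∀ lam : ℝ, 0 < lam → L (v.1, lam • v.2) = lam ^ 2 * L v
  nondeg : ∀ v ∈ A, ∀ u : E, (∀ w : E, fundTensor L v u w = 0) → u = 0

/-- The Levi-Civita–Chern connection of `L` : torsion-free and `∇g = 0`. -/
def IsLCChern {A : Set (E × E)} (L : E × E → ℝ) (D : AnisoConn A) : Prop :=
  D.IsTorsionFree ∧ ∀ v ∈ A, ∀ u w z : E, D.dT02 (fundTensor L) v u w z = 0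

/-- The property `∇̂ g = 𝒬` for an anisotropic connection. -/
def MetricDeriv {A : Set (E × E)} (L : E × E → ℝ) (D : AnisoConn A)
    (QT : E × E → E → E → E → ℝ) : Prop :=
  ∀ v ∈ A, ∀ u w z : E, D.dT02 (fundTensor L) v u w z = QT v u w z

/-- An `A`-anisotropic `(0,3)`-tensor : pointwise multilinear and smooth in `v`. -/
def IsAnisoTensor03 (A : Set (E × E)) (QT : E × E → E → E → E → ℝ) : Prop :=
  (∀ v ∈ A, ∀ (c : ℝ) (x x' y z : E),
      QT v (c • x + x') y z = c * QT v x y z + QT v x' y z) ∧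
  (∀ v ∈ A, ∀ (c : ℝ) (x y y' z : E),
      QT v x (c • y + y') z = c * QT v x y z + QT v x y' z) ∧
  (∀ v ∈ A, ∀ (c : ℝ) (x y z z' : E),
      QT v x y (c • z + z') = c * QT v x y z + QT v x y z') ∧
  ∀ x y z : E, ContDiffOn ℝ (⊤ : ℕ∞) (fun v => QT v x y z) A

/-- Symmetry of an anisotropic `(0,3)`-tensor. -/
def Symm03 (A : Set (E × E)) (QT : E × E → E → E → E → ℝ) : Prop :=
  ∀ v ∈ A, ∀ x y z : E, QT v x y z = QT v y x z ∧ QT v x y z = QT v x z y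

/-- The affine connection with Christoffel operator `Γb` in the chart model. -/
def affConn (Γb : E → E → E → E) (X Y : E → E) : E → E :=
  fun p => fderiv ℝ Y p (X p) + Γb p (X p) (Y p)

/-- The curvature tensor of the affine connection with Christoffel operator `Γb`. -/
def affR (Γb : E → E → E → E) (X Y Z : E → E) : E → E := fun p =>
  affConn Γb X (affConn Γb Y Z) p - affConn Γb Y (affConn Γb X Z) p
    - affConn Γb (lieB X Y) Z p

theorem exists_bump' [FiniteDimensional ℝ E] {U : Set E} {x : E} (hU : U ∈ 𝓝 x) :
    ∃ χ : E → ℝ, ContDiff ℝ (⊤ : ℕ∞) χ ∧ tsupport χ ⊆ U ∧ χ =ᶠ[𝓝 x] 1 := by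
  obtain ⟨d, d_pos, hd⟩ := Euclidean.nhds_basis_closedBall.mem_iff.1 hU
  let c : ContDiffBump (toEuclidean x) :=
    { rIn := d / 2, rOut := d, rIn_pos := half_pos d_pos, rIn_lt_rOut := half_lt_self d_pos }
  let f : E → ℝ := c ∘ toEuclidean
  have f_supp : Function.support f ⊆ Euclidean.ball x d := by
    intro y hy
    have : toEuclidean y ∈ Function.support c := by
      simpa only [f, Function.mem_support, Function.comp_apply, Ne] using hy
    rwa [c.support_eq] at this
  have f_tsupp : tsupport f ⊆ Euclidean.closedBall x d := by
    rw [tsupport, ← Euclidean.closure_ball _ d_pos.ne']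
    exact closure_mono f_supp
  refine ⟨f, ?_, f_tsupp.trans hd, ?_⟩
  · exact c.contDiff.comp (ContinuousLinearEquiv.contDiff _)
  · filter_upwards [Euclidean.closedBall_mem_nhds (half_pos d_pos)] with y hy
    exact c.one_of_mem_closedBall hy

namespace AnisoConn

variable {A : Set (E × E)} (D : AnisoConn A) {v : E × E}

theorem conn_zero (hv : v ∈ A) (X : E → E) : D.conn v X (fun _ => (0 : E)) = 0 := by
  have h := D.add_right v hv X (fun _ => 0) (fun _ => 0)
  simp only [add_zero] at h
  have h2 : D.conn v X (fun _ => (0:E)) + 0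
      = D.conn v X (fun _ => (0:E)) + D.conn v X (fun _ => (0:E)) := by
    rw [add_zero]; exact h
  exact (add_left_cancel h2).symm

theorem conn_sub (hv : v ∈ A) (X Y Z : E → E) :
    D.conn v X (fun p => Y p - Z p) = D.conn v X Y - D.conn v X Z := by
  have h := D.add_right v hv X (fun p => Y p - Z p) Z
  simp only [sub_add_cancel] at h
  exact eq_sub_of_add_eq h.symm

theorem conn_cv_add (hv : v ∈ A) (X : E → E) (a b : E) :
    D.conn v X (cv (a + b)) = D.conn v X (cv a) + D.conn v X (cv b) :=
  D.add_right v hv X (cv a) (cv b)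

theorem conn_cv_smul (hv : v ∈ A) (X : E → E) (c : ℝ) (a : E) :
    D.conn v X (cv (c • a)) = c • D.conn v X (cv a) := by
  have h := D.leibniz v hv (fun _ => c) contDiff_const X (cv a)
  simp [cv] at h
  exact h

/-- `u ↦ ∇^v_X (cv u)` as a linear map. -/
def connCv (hv : v ∈ A) (X : E → E) : E →ₗ[ℝ] E where
  toFun a := D.conn v X (cv a)
  map_add' := D.conn_cv_add hv X
  map_smul' := D.conn_cv_smul hv X

theorem conn_sum (hv : v ∈ A) (X : E → E) {ι : Type*} (s : Finset ι) (h : ι → E → E) :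
    D.conn v X (fun p => ∑ i ∈ s, h i p) = ∑ i ∈ s, D.conn v X (h i) := by
  classical
  induction s using Finset.induction with
  | empty => simpa using D.conn_zero hv X
  | @insert a s hni ih =>
      simp only [Finset.sum_insert hni]
      rw [D.add_right v hv X (h a) (fun p => ∑ i ∈ s, h i p), ih]

end AnisoConn

namespace AnisoConn
variable {A : Set (E × E)} (D : AnisoConn A) {v : E × E}

theorem conn_eq_fderiv_add [FiniteDimensional ℝ E] (hv : v ∈ A) (X : E → E)
    (W : E → E) (hW : ContDiff ℝ (⊤ : ℕ∞) W) :
    D.conn v X W = fderiv ℝ W v.1 (X v.1) + D.conn v X (cv (W v.1)) := by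
  classical
  set b : Module.Basis (Fin (Module.finrank ℝ E)) ℝ E := Module.finBasis ℝ E with hb
  set T : E →L[ℝ] (Fin (Module.finrank ℝ E) → ℝ) :=
    LinearMap.toContinuousLinearMap (b.equivFun : E ≃ₗ[ℝ] _).toLinearMap with hT
  have hTapp : ∀ u : E, T u = b.equivFun u := fun u => rfl
  set g : Fin (Module.finrank ℝ E) → E → ℝ := fun i p => T (W p) i with hg
  have hgsm : ∀ i, ContDiff ℝ (⊤ : ℕ∞) (g i) := by
    intro i
    exact contDiff_pi.1 (T.contDiff.comp hW) i
  have hWsum : W = fun p => ∑ i, g i p • b i := by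
    funext p
    rw [← b.sum_equivFun (W p)]
    rfl
  have step1 : D.conn v X W = ∑ i, D.conn v X (fun p => g i p • b i) := by
    conv_lhs => rw [hWsum]
    exact D.conn_sum hv X Finset.univ _
  have step2 : ∀ i, D.conn v X (fun p => g i p • b i)
      = fderiv ℝ (g i) v.1 (X v.1) • b i + g i v.1 • D.conn v X (cv (b i)) := by
    intro i
    exact D.leibniz v hv (g i) (hgsm i) X (cv (b i))
  have hWdiff : DifferentiableAt ℝ W v.1 :=
    (hW.differentiable (by simp)) v.1
  have hgder : ∀ i, fderiv ℝ (g i) v.1 (X v.1) = T (fderiv ℝ W v.1 (X v.1)) i := by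
    intro i
    have h1 : HasFDerivAt (g i)
        (((ContinuousLinearMap.proj i).comp T).comp (fderiv ℝ W v.1)) v.1 :=
      (((ContinuousLinearMap.proj i).comp T).hasFDerivAt).comp v.1 hWdiff.hasFDerivAt
    rw [h1.fderiv]
    rfl
  have hsum1 : ∑ i, (fderiv ℝ (g i) v.1 (X v.1)) • b i = fderiv ℝ W v.1 (X v.1) := by
    simp only [hgder, hTapp]
    exact b.sum_equivFun _
  have hsum2 : ∑ i, g i v.1 • D.conn v X (cv (b i)) = D.conn v X (cv (W v.1)) := by
    have h3 : W v.1 = ∑ i, g i v.1 • b i := by conv_lhs => rw [hWsum]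
    have h4 : D.connCv hv X (W v.1) = ∑ i, g i v.1 • D.connCv hv X (b i) := by
      rw [h3, map_sum]
      simp only [map_smul]
    exact h4.symm
  rw [step1]
  simp only [step2]
  rw [Finset.sum_add_distrib, hsum1, hsum2]

end AnisoConn

namespace AnisoConn
variable {A : Set (E × E)} (D : AnisoConn A) {v : E × E}

theorem conn_congr [FiniteDimensional ℝ E] (hv : v ∈ A) (X : E → E) {W₁ W₂ : E → E}
    (h : W₁ =ᶠ[𝓝 v.1] W₂) : D.conn v X W₁ = D.conn v X W₂ := by
  set W : E → E := fun p => W₁ p - W₂ p with hWdef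
  have hW0 : ∀ᶠ p in 𝓝 v.1, W p = 0 := by
    filter_upwards [h] with p hp
    simp [hWdef, hp]
  obtain ⟨χ, hχsm, hχsupp, hχ1⟩ := exists_bump' (U := {p | W p = 0}) hW0
  have hzero : (fun p => χ p • W p) = (fun _ => (0 : E)) := by
    funext p
    by_cases hp : p ∈ tsupport χ
    · have : W p = 0 := hχsupp hp
      simp [this]
    · have : χ p = 0 := image_eq_zero_of_notMem_tsupport hp
      simp [this]
  have h1 := D.leibniz v hv χ hχsm X W
  rw [hzero, D.conn_zero hv X] at h1
  have hWv : W v.1 = 0 := hW0.self_of_nhds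
  have hχv : χ v.1 = 1 := hχ1.self_of_nhds
  rw [hWv, hχv, smul_zero, zero_add, one_smul] at h1
  have h2 : D.conn v X W = 0 := h1.symm
  rw [D.conn_sub hv X W₁ W₂] at h2
  exact sub_eq_zero.1 h2

theorem conn_eq_fderiv_add_of_contDiffOn [FiniteDimensional ℝ E] (hv : v ∈ A) (X : E → E)
    {W : E → E} {U : Set E} (hU : IsOpen U) (hx : v.1 ∈ U)
    (hW : ContDiffOn ℝ (⊤ : ℕ∞) W U) :
    D.conn v X W = fderiv ℝ W v.1 (X v.1) + D.conn v X (cv (W v.1)) := by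
  obtain ⟨χ, hχsm, hχsupp, hχ1⟩ := exists_bump' (hU.mem_nhds hx)
  set W' : E → E := fun p => χ p • W p + (1 - χ p) • W v.1 with hW'def
  have hW'W : W' =ᶠ[𝓝 v.1] W := by
    filter_upwards [hχ1] with p hp
    simp [hW'def, hp]
  have hW'sm : ContDiff ℝ (⊤ : ℕ∞) W' := by
    rw [contDiff_iff_contDiffAt]
    intro p
    by_cases hp : p ∈ U
    · exact (hχsm.contDiffAt.smul (hW.contDiffAt (hU.mem_nhds hp))).add
        ((contDiff_const.sub hχsm).contDiffAt.smul contDiffAt_const)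
    · have hp' : p ∉ tsupport χ := fun hmem => hp (hχsupp hmem)
      have hev : W' =ᶠ[𝓝 p] fun _ => W v.1 := by
        filter_upwards [(isClosed_tsupport χ).isOpen_compl.mem_nhds hp'] with q hq
        have : χ q = 0 := image_eq_zero_of_notMem_tsupport hq
        simp [hW'def, this]
      exact contDiffAt_const.congr_of_eventuallyEq hev
  have e1 : D.conn v X W = D.conn v X W' := D.conn_congr hv X hW'W.symm
  rw [e1, D.conn_eq_fderiv_add hv X W' hW'sm, hW'W.fderiv_eq, hW'W.self_of_nhds]

end AnisoConn

theorem vdiff_eq' {F : E × E → E} {v : E × E} (hF : DifferentiableAt ℝ F v) (z : E) :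
    deriv (fun t : ℝ => F (v.1, v.2 + t • z)) 0 = fderiv ℝ F v (0, z) := by
  have hγ : HasDerivAt (fun t : ℝ => ((v.1, v.2 + t • z) : E × E)) ((0 : E), z) 0 := by
    refine HasDerivAt.prodMk (hasDerivAt_const (0:ℝ) v.1) ?_
    have := ((hasDerivAt_id (0:ℝ)).smul_const z).const_add v.2
    simpa using this
  have h0 : ((v.1, v.2 + (0:ℝ) • z) : E × E) = v := by simp
  have hF' : HasFDerivAt F (fderiv ℝ F v) ((v.1, v.2 + (0:ℝ) • z) : E × E) := by
    rw [h0]; exact hF.hasFDerivAt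
  have := (hF'.comp_hasDerivAt 0 hγ)
  exact this.deriv

/-- Proposition 2.8, eq. (10) of the paper: for any
`A`-admissible extension `V` of `v` on an open neighbourhood `Ω` of `π(v)`,
`R_v(X,Y)Z = (R^V)_p(X,Y)Z - (P_V)_p(Y,Z,∇^V_X V) + (P_V)_p(X,Z,∇^V_Y V)`. -/
theorem stmt_0 [FiniteDimensional ℝ E] {A : Set (E × E)}
    (hA : IsOpen A) (hAproj : ∀ p : E, ∃ y : E, (p, y) ∈ A)
    (D : AnisoConn A) (v : E × E) (hv : v ∈ A)
    (Ω : Set E) (hΩ : IsOpen Ω) (hpΩ : v.1 ∈ Ω)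
    (V : E → E) (hVsm : ContDiffOn ℝ (⊤ : ℕ∞) V Ω) (hVext : V v.1 = v.2)
    (hVadm : ∀ p ∈ Ω, (p, V p) ∈ A)
    (X Y Z : E → E) (hX : ContDiff ℝ (⊤ : ℕ∞) X) (hY : ContDiff ℝ (⊤ : ℕ∞) Y)
    (hZ : ContDiff ℝ (⊤ : ℕ∞) Z) :
    D.R v X Y Z
      = D.RV V X Y Z v.1
        - D.P v Y Z (D.connV V X V v.1)
        + D.P v X Z (D.connV V Y V v.1) := by
  have hvV : ((v.1, V v.1) : E × E) = v := by rw [hVext]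
  have hVdiff : DifferentiableAt ℝ V v.1 :=
    (hVsm.contDiffAt (hΩ.mem_nhds hpΩ)).differentiableAt (by simp)
  have hF₁ : ContDiffOn ℝ (⊤ : ℕ∞) (fun w : E × E => D.conn w Y Z) A :=
    D.smooth_conn Y Z hY hZ
  have hF₂ : ContDiffOn ℝ (⊤ : ℕ∞) (fun w : E × E => D.conn w X Z) A :=
    D.smooth_conn X Z hX hZ
  have hF₁v : DifferentiableAt ℝ (fun w : E × E => D.conn w Y Z) v :=
    (hF₁.contDiffAt (hA.mem_nhds hv)).differentiableAt (by simp)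
  have hF₂v : DifferentiableAt ℝ (fun w : E × E => D.conn w X Z) v :=
    (hF₂.contDiffAt (hA.mem_nhds hv)).differentiableAt (by simp)
  set L₁ : E × E →L[ℝ] E := fderiv ℝ (fun w : E × E => D.conn w Y Z) v with hL₁
  set L₂ : E × E →L[ℝ] E := fderiv ℝ (fun w : E × E => D.conn w X Z) v with hL₂
  set DV : E →L[ℝ] E := fderiv ℝ V v.1 with hDV
  -- derivative of the map p ↦ (p, V p)
  have hψd : HasFDerivAt (fun p : E => ((p, V p) : E × E))
      ((ContinuousLinearMap.id ℝ E).prod DV) v.1 :=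
    (hasFDerivAt_id v.1).prodMk hVdiff.hasFDerivAt
  have hψ0 : HasFDerivAt (fun p : E => ((p, v.2) : E × E))
      ((ContinuousLinearMap.id ℝ E).prod 0) v.1 :=
    (hasFDerivAt_id v.1).prodMk (hasFDerivAt_const v.2 v.1)
  -- vertical derivatives
  have Ed₁ : ∀ z : E, deriv (fun t : ℝ => D.conn (v.1, v.2 + t • z) Y Z) 0 = L₁ (0, z) :=
    fun z => vdiff_eq' hF₁v z
  have Ed₂ : ∀ z : E, deriv (fun t : ℝ => D.conn (v.1, v.2 + t • z) X Z) 0 = L₂ (0, z) :=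
    fun z => vdiff_eq' hF₂v z
  -- ∇^V_X V and ∇^V_Y V
  have EVX : D.conn v X V = DV (X v.1) + D.conn v X (cv v.2) := by
    rw [D.conn_eq_fderiv_add_of_contDiffOn hv X hΩ hpΩ hVsm, hVext]
  have EVY : D.conn v Y V = DV (Y v.1) + D.conn v Y (cv v.2) := by
    rw [D.conn_eq_fderiv_add_of_contDiffOn hv Y hΩ hpΩ hVsm, hVext]
  -- the constant-extension fields
  have hUc : IsOpen ((fun p : E => ((p, v.2) : E × E)) ⁻¹' A) :=
    hA.preimage (continuous_id.prodMk continuous_const)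
  have hvUc : v.1 ∈ ((fun p : E => ((p, v.2) : E × E)) ⁻¹' A) := hv
  have hWc₁ : ContDiffOn ℝ (⊤ : ℕ∞) (fun p : E => D.conn (p, v.2) Y Z)
      ((fun p : E => ((p, v.2) : E × E)) ⁻¹' A) :=
    hF₁.comp (contDiffOn_id.prodMk contDiffOn_const) (fun p hp => hp)
  have hWc₂ : ContDiffOn ℝ (⊤ : ℕ∞) (fun p : E => D.conn (p, v.2) X Z)
      ((fun p : E => ((p, v.2) : E × E)) ⁻¹' A) :=
    hF₂.comp (contDiffOn_id.prodMk contDiffOn_const) (fun p hp => hp)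
  have Ec₁ : D.conn v X (fun p => D.conn (p, v.2) Y Z)
      = L₁ (X v.1, 0) + D.conn v X (cv (D.conn v Y Z)) := by
    rw [D.conn_eq_fderiv_add_of_contDiffOn hv X hUc hvUc hWc₁]
    have hd : HasFDerivAt (fun p : E => D.conn (p, v.2) Y Z)
        (L₁.comp ((ContinuousLinearMap.id ℝ E).prod 0)) v.1 :=
      (hF₁v.hasFDerivAt.comp v.1 hψ0 :)
    rw [hd.fderiv]
    rfl
  have Ec₂ : D.conn v Y (fun p => D.conn (p, v.2) X Z)
      = L₂ (Y v.1, 0) + D.conn v Y (cv (D.conn v X Z)) := by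
    rw [D.conn_eq_fderiv_add_of_contDiffOn hv Y hUc hvUc hWc₂]
    have hd : HasFDerivAt (fun p : E => D.conn (p, v.2) X Z)
        (L₂.comp ((ContinuousLinearMap.id ℝ E).prod 0)) v.1 :=
      (hF₂v.hasFDerivAt.comp v.1 hψ0 :)
    rw [hd.fderiv]
    rfl
  -- the V-extension fields
  have hWV₁ : ContDiffOn ℝ (⊤ : ℕ∞) (fun p : E => D.conn (p, V p) Y Z) Ω :=
    hF₁.comp (contDiffOn_id.prodMk hVsm) (fun p hp => hVadm p hp)
  have hWV₂ : ContDiffOn ℝ (⊤ : ℕ∞) (fun p : E => D.conn (p, V p) X Z) Ω :=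
    hF₂.comp (contDiffOn_id.prodMk hVsm) (fun p hp => hVadm p hp)
  have hFat₁ : HasFDerivAt (fun w : E × E => D.conn w Y Z) L₁ ((v.1, V v.1) : E × E) := by
    rw [hvV]; exact hF₁v.hasFDerivAt
  have hFat₂ : HasFDerivAt (fun w : E × E => D.conn w X Z) L₂ ((v.1, V v.1) : E × E) := by
    rw [hvV]; exact hF₂v.hasFDerivAt
  have EV₁ : D.conn v X (fun p => D.conn (p, V p) Y Z)
      = L₁ (X v.1, 0) + L₁ (0, DV (X v.1)) + D.conn v X (cv (D.conn v Y Z)) := by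
    rw [D.conn_eq_fderiv_add_of_contDiffOn hv X hΩ hpΩ hWV₁]
    have hd : HasFDerivAt (fun p : E => D.conn (p, V p) Y Z)
        (L₁.comp ((ContinuousLinearMap.id ℝ E).prod DV)) v.1 :=
      (hFat₁.comp v.1 hψd :)
    rw [hd.fderiv]
    have hval : D.conn (v.1, V v.1) Y Z = D.conn v Y Z := by rw [hvV]
    rw [hval]
    have hsplit : ((X v.1, DV (X v.1)) : E × E) = (X v.1, (0 : E)) + ((0 : E), DV (X v.1)) := by
      simp
    show L₁ (X v.1, DV (X v.1)) + _ = _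
    rw [hsplit, map_add]
  have EV₂ : D.conn v Y (fun p => D.conn (p, V p) X Z)
      = L₂ (Y v.1, 0) + L₂ (0, DV (Y v.1)) + D.conn v Y (cv (D.conn v X Z)) := by
    rw [D.conn_eq_fderiv_add_of_contDiffOn hv Y hΩ hpΩ hWV₂]
    have hd : HasFDerivAt (fun p : E => D.conn (p, V p) X Z)
        (L₂.comp ((ContinuousLinearMap.id ℝ E).prod DV)) v.1 :=
      (hFat₂.comp v.1 hψd :)
    rw [hd.fderiv]
    have hval : D.conn (v.1, V v.1) X Z = D.conn v X Z := by rw [hvV]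
    rw [hval]
    have hsplit : ((Y v.1, DV (Y v.1)) : E × E) = (Y v.1, (0 : E)) + ((0 : E), DV (Y v.1)) := by
      simp
    show L₂ (Y v.1, DV (Y v.1)) + _ = _
    rw [hsplit, map_add]
  have split₁ : ∀ a b : E, L₁ ((0 : E), a + b) = L₁ (0, a) + L₁ (0, b) := by
    intro a b
    have h : (((0 : E), a + b) : E × E) = ((0 : E), a) + ((0 : E), b) := by simp
    rw [h, map_add]
  have split₂ : ∀ a b : E, L₂ ((0 : E), a + b) = L₂ (0, a) + L₂ (0, b) := by
    intro a b
    have h : (((0 : E), a + b) : E × E) = ((0 : E), a) + ((0 : E), b) := by simp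
    rw [h, map_add]
  simp only [AnisoConn.R, AnisoConn.dAniso, vdiff, AnisoConn.RV, AnisoConn.connV, AnisoConn.P]
  rw [hvV, EVX, EVY]
  rw [show D.connV V Y Z = fun p => D.conn (p, V p) Y Z from rfl,
      show D.connV V X Z = fun p => D.conn (p, V p) X Z from rfl]
  simp only [Ed₁, Ed₂]
  rw [Ec₁, Ec₂, EV₁, EV₂]
  simp only [split₁, split₂]
  abel
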